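/- For every positive integer n, the intersection of Θ_n with the unit circle { z ∈ ℂ : |z| = 1 } equals the set of points { e^{2πi p/q} : p/q ∈ F_n }, i.e., the set of points e^{2πi p/q} where p, q are integers with 0 ≤ p ≤ q ≤ n, q ≥ 1, and gcd(p,q) = 1. -/

import Mathlib

/-- An `n`-by-`n` real matrix is (row-)stochastic if its entries are nonnegative
and each of its rows sums to `1`. -/
def IsStochastic {n : ℕ} (A : Matrix (Fin n) (Fin n) ℝ) : Prop :=
  (∀ i j, 0 ≤ A i j) ∧ ∀ i, ∑ j, A i j = 1

/-- `Theta n` is the set of complex numbers that are an eigenvalue of some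
`n`-by-`n` row-stochastic matrix. -/
def Theta (n : ℕ) : Set ℂ :=
  {z | ∃ A : Matrix (Fin n) (Fin n) ℝ, IsStochastic A ∧
    ∃ v : Fin n → ℂ, v ≠ 0 ∧ (A.map Complex.ofReal).mulVec v = z • v}

open Complex Finset ComplexConjugate

/-- pow reduces mod `q` when `z ^ q = 1`. -/
lemma pow_mod_eq' {z : ℂ} {q : ℕ} (hz : z ^ q = 1) (m : ℕ) : z ^ (m % q) = z ^ m := by
  conv_rhs => rw [← Nat.mod_add_div m q]
  rw [pow_add, pow_mul, hz, one_pow, mul_one]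

/-- An eigenvalue on the unit circle of an `n`-by-`n` stochastic matrix is a
`q`-th root of unity for some `1 ≤ q ≤ n`. -/
lemma key_root (n : ℕ) (hn : 0 < n) {z : ℂ} (hz : z ∈ Theta n) (habs : ‖z‖ = 1) :
    ∃ q : ℕ, 0 < q ∧ q ≤ n ∧ z ^ q = 1 := by
  obtain ⟨A, ⟨hpos, hsum⟩, v, hv, heig⟩ := hz
  have hz0 : z ≠ 0 := by intro h; rw [h] at habs; simp at habs
  have hne : (univ : Finset (Fin n)).Nonempty := by
    have : Nonempty (Fin n) := ⟨⟨0, hn⟩⟩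
    exact univ_nonempty
  set M : ℝ := univ.sup' hne (fun i => ‖v i‖) with hM
  have hle : ∀ j, ‖v j‖ ≤ M := fun j => Finset.le_sup' (fun i => ‖v i‖) (mem_univ j)
  have hMpos : 0 < M := by
    obtain ⟨j, hj⟩ := Function.ne_iff.mp hv
    exact lt_of_lt_of_le (by simpa using hj : 0 < ‖v j‖) (hle j)
  have heig' : ∀ i, ∑ j, (A i j : ℂ) * v j = z * v i := by
    intro i
    have := congrFun heig i
    simpa [Matrix.mulVec, dotProduct, Matrix.map_apply] using this
  -- equality case of the triangle inequality
  have hkey : ∀ i, ‖v i‖ = M → ∀ j, A i j ≠ 0 → v j = z * v i := by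
    intro i hi j hj
    set u := z * v i with hu
    have hMu : ‖u‖ = M := by rw [hu, norm_mul, habs, one_mul, hi]
    have hsum' : ∑ j, A i j * (v j * conj u).re = M ^ 2 := by
      calc ∑ j, A i j * (v j * conj u).re
          = ((∑ j, (A i j : ℂ) * v j) * conj u).re := by
            rw [Finset.sum_mul, Complex.re_sum]
            refine Finset.sum_congr rfl fun j _ => ?_
            rw [mul_assoc, Complex.re_ofReal_mul]
        _ = (u * conj u).re := by rw [heig' i]
        _ = M ^ 2 := by rw [Complex.mul_conj, ← Complex.sq_norm, hMu, Complex.ofReal_re]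
    have hterm : ∀ j, (v j * conj u).re ≤ M ^ 2 := by
      intro j
      calc (v j * conj u).re ≤ ‖v j * conj u‖ := Complex.re_le_norm _
        _ = ‖v j‖ * M := by rw [norm_mul, Complex.norm_conj, hMu]
        _ ≤ M * M := mul_le_mul_of_nonneg_right (hle j) hMpos.le
        _ = M ^ 2 := (sq M).symm
    have hzero : ∀ k ∈ univ, A i k * (M ^ 2 - (v k * conj u).re) = 0 := by
      refine (Finset.sum_eq_zero_iff_of_nonneg fun k _ =>
        mul_nonneg (hpos i k) (sub_nonneg.mpr (hterm k))).mp ?_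
      have heq : ∑ k, A i k * (M ^ 2 - (v k * conj u).re)
          = (∑ k, A i k) * M ^ 2 - ∑ k, A i k * (v k * conj u).re := by
        rw [Finset.sum_mul, ← Finset.sum_sub_distrib]
        exact Finset.sum_congr rfl fun k _ => by ring
      rw [heq, hsum i, hsum', one_mul, sub_self]
    have hre : (v j * conj u).re = M ^ 2 := by
      have h0 := hzero j (mem_univ j)
      rcases mul_eq_zero.mp h0 with h | h
      · exact absurd h hj
      · linarith
    have hvj : ‖v j‖ = M := by
      have h1 : M ^ 2 ≤ ‖v j‖ * M := by
        calc M ^ 2 = (v j * conj u).re := hre.symm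
          _ ≤ ‖v j * conj u‖ := Complex.re_le_norm _
          _ = ‖v j‖ * M := by rw [norm_mul, Complex.norm_conj, hMu]
      have h2 : M ≤ ‖v j‖ := by nlinarith
      exact le_antisymm (hle j) h2
    have hns : Complex.normSq (v j - u) = 0 := by
      rw [Complex.normSq_sub, ← Complex.sq_norm, ← Complex.sq_norm u, hvj, hMu, hre]
      ring
    exact sub_eq_zero.mp (Complex.normSq_eq_zero.mp hns)
  -- every row has a nonzero entry
  have hex : ∀ i, ∃ j, A i j ≠ 0 := by
    intro i
    by_contra h
    push_neg at h
    have := hsum i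
    simp [h] at this
  choose f hf using hex
  -- pick a coordinate of maximal modulus
  obtain ⟨i0, -, hi0⟩ := Finset.exists_mem_eq_sup' hne (fun i => ‖v i‖)
  -- iterate
  have hiter : ∀ k : ℕ, ‖v (f^[k] i0)‖ = M ∧ v (f^[k] i0) = z ^ k * v i0 := by
    intro k
    induction k with
    | zero => simp [hi0.symm, hM]
    | succ k ih =>
      rw [Function.iterate_succ_apply']
      have h1 := hkey _ ih.1 _ (hf (f^[k] i0))
      constructor
      · rw [h1, norm_mul, habs, one_mul, ih.1]
      · rw [h1, ih.2, pow_succ]; ring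
  -- pigeonhole
  have hcard : (univ : Finset (Fin n)).card < (Finset.range (n + 1)).card := by
    simp
  obtain ⟨a, ha, b, hb, hab, heq⟩ :=
    Finset.exists_ne_map_eq_of_card_lt_of_maps_to hcard
      (fun k _ => mem_univ (f^[k] i0))
  rw [Finset.mem_range] at ha hb
  have hvi0 : v i0 ≠ 0 := by
    intro h
    have hM0 : M = 0 := by rw [hM, hi0, h]; simp
    exact hMpos.ne' hM0
  have hpow : ∀ {a b : ℕ}, a < b → b ≤ n → f^[a] i0 = f^[b] i0 → ∃ q, 0 < q ∧ q ≤ n ∧ z ^ q = 1 := by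
    intro a b hlt hbn he
    refine ⟨b - a, Nat.sub_pos_of_lt hlt, le_trans (Nat.sub_le _ _) hbn, ?_⟩
    have h1 : z ^ a * v i0 = z ^ b * v i0 := by
      rw [← (hiter a).2, ← (hiter b).2, he]
    have h2 : z ^ a = z ^ b := mul_right_cancel₀ hvi0 h1
    have h3 : z ^ a * z ^ (b - a) = z ^ a * 1 := by
      rw [← pow_add, Nat.add_sub_cancel' hlt.le, mul_one, h2]
    exact mul_left_cancel₀ (pow_ne_zero _ hz0) h3
  rcases lt_or_gt_of_ne hab with h | h
  · exact hpow h (Nat.lt_succ_iff.mp hb) heq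
  · exact hpow h (Nat.lt_succ_iff.mp ha) heq.symm

/-- The region `Θ_n` intersects the unit circle precisely at the points
`e^{2πi p/q}` where `p/q` is a Farey fraction of order `n`. -/
theorem theta_inter_circle (n : ℕ) (hn : 0 < n) :
    Theta n ∩ {z : ℂ | ‖z‖ = 1} =
      {z : ℂ | ∃ p q : ℕ, 0 < q ∧ p ≤ q ∧ q ≤ n ∧ Nat.gcd p q = 1 ∧
        z = Complex.exp (2 * Real.pi * Complex.I * ((p : ℂ) / (q : ℂ)))} := by
  ext z
  simp only [Set.mem_inter_iff, Set.mem_setOf_eq]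
  constructor
  · rintro ⟨hz, habs⟩
    obtain ⟨q, hq0, hqn, hzq⟩ := key_root n hn hz habs
    haveI : NeZero q := ⟨hq0.ne'⟩
    obtain ⟨k, hk, hke⟩ := (Complex.isPrimitiveRoot_exp q hq0.ne').eq_pow_of_pow_eq_one hzq
    have hg0 : 0 < Nat.gcd k q := Nat.gcd_pos_of_pos_right k hq0
    refine ⟨k / Nat.gcd k q, q / Nat.gcd k q, Nat.div_pos (Nat.le_of_dvd hq0 (Nat.gcd_dvd_right k q)) hg0,
      Nat.div_le_div_right hk.le, le_trans (Nat.div_le_self _ _) hqn,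
      Nat.coprime_div_gcd_div_gcd hg0, ?_⟩
    rw [← hke, ← Complex.exp_nat_mul]
    congr 1
    have hqc : (q : ℂ) ≠ 0 := Nat.cast_ne_zero.mpr hq0.ne'
    have hgc : ((Nat.gcd k q : ℕ) : ℂ) ≠ 0 := Nat.cast_ne_zero.mpr hg0.ne'
    have hfrac : (k : ℂ) / (q : ℂ)
        = ((k / Nat.gcd k q : ℕ) : ℂ) / ((q / Nat.gcd k q : ℕ) : ℂ) := by
      set g := Nat.gcd k q with hgdef
      obtain ⟨a, ha⟩ : g ∣ k := Nat.gcd_dvd_left k q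
      obtain ⟨b, hb⟩ : g ∣ q := Nat.gcd_dvd_right k q
      have hka : k / g = a := by rw [ha]; exact Nat.mul_div_cancel_left a hg0
      have hqb : q / g = b := by rw [hb]; exact Nat.mul_div_cancel_left b hg0
      rw [hka, hqb, ha, hb]
      push_cast
      rw [mul_div_mul_left _ _ hgc]
    have harg : (k : ℂ) * (2 * (Real.pi : ℂ) * Complex.I / (q : ℂ))
        = 2 * (Real.pi : ℂ) * Complex.I * ((k : ℂ) / (q : ℂ)) := by ring
    rw [harg, hfrac]
  · rintro ⟨p, q, hq0, hpq, hqn, hgcd, rfl⟩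
    set z := Complex.exp (2 * Real.pi * Complex.I * ((p : ℂ) / (q : ℂ))) with hzdef
    have hqc : (q : ℂ) ≠ 0 := Nat.cast_ne_zero.mpr hq0.ne'
    have hzq : z ^ q = 1 := by
      rw [hzdef, ← Complex.exp_nat_mul]
      have : (q : ℂ) * (2 * Real.pi * Complex.I * ((p : ℂ) / (q : ℂ)))
          = (p : ℂ) * (2 * Real.pi * Complex.I) := by field_simp
      rw [this, Complex.exp_nat_mul, Complex.exp_two_pi_mul_I, one_pow]
    have habs : ‖z‖ = 1 := by
      rw [hzdef, Complex.norm_exp]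
      have : (2 * Real.pi * Complex.I * ((p : ℂ) / (q : ℂ))).re = 0 := by
        simp [Complex.div_re, Complex.mul_re]
      rw [this, Real.exp_zero]
    refine ⟨?_, habs⟩
    -- construct the cyclic stochastic matrix
    set t : Fin n → Fin n := fun i =>
      if h : i.val < q then ⟨(i.val + 1) % q, lt_of_lt_of_le (Nat.mod_lt _ hq0) hqn⟩ else i
      with ht
    refine ⟨fun i j => if j = t i then 1 else 0, ⟨fun i j => by positivity, fun i => by
      simp [Finset.sum_ite_eq']⟩, fun j => if j.val < q then z ^ j.val else 0, ?_, ?_⟩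
    · intro h
      have h0 : (0 : ℕ) < n := hn
      have := congrFun h ⟨0, h0⟩
      simp [hq0] at this
    · funext i
      have hmv : (Matrix.map (fun i j => if j = t i then (1:ℝ) else 0) Complex.ofReal).mulVec
          (fun j => if j.val < q then z ^ j.val else 0) i
          = (if (t i).val < q then z ^ (t i).val else 0) := by
        have hpt : ∀ x : Fin n, (if (x : ℕ) < q then if x = t i then z ^ (x : ℕ) else 0 else 0)
            = (if x = t i then (if (x : ℕ) < q then z ^ (x : ℕ) else 0) else 0) := by
          intro x
          by_cases h1 : (x : ℕ) < q <;> by_cases h2 : x = t i <;> simp [h1, h2]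
        simp only [Matrix.mulVec, dotProduct, Matrix.map_apply, Matrix.map, Matrix.of_apply, apply_ite Complex.ofReal,
          ite_mul, one_mul, zero_mul, Complex.ofReal_one, Complex.ofReal_zero, mul_ite, mul_one,
          mul_zero]
        rw [Finset.sum_congr rfl (fun x _ => hpt x), Finset.sum_ite_eq' univ (t i)]
        simp
      rw [hmv]
      by_cases hi : i.val < q
      · have hti : (t i).val = (i.val + 1) % q := by simp [ht, hi]
        have htlt : (t i).val < q := by rw [hti]; exact Nat.mod_lt _ hq0
        rw [if_pos htlt, hti, pow_mod_eq' hzq]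
        simp only [Pi.smul_apply, smul_eq_mul, hi, if_true]
        rw [pow_succ]; ring
      · have hti : t i = i := by simp [ht, hi]
        simp [hti, hi]
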